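/- Let ∑ (x_n, y_n) be a conditionally convergent series in ℝ² with the reduction property. Then its set of Levy vectors equals {(0,1), (0,-1)}. -/

import Mathlib

open Filter Topology

/-- Euclidean norm on the plane `ℝ × ℝ`. -/
noncomputable def enorm2 (v : ℝ × ℝ) : ℝ := Real.sqrt (v.1 ^ 2 + v.2 ^ 2)

/-- Euclidean inner product on the plane. -/
def dot2 (u v : ℝ × ℝ) : ℝ := u.1 * v.1 + u.2 * v.2

/-- `u` is a Levy vector of the series `∑ x n`: `u` is a unit vector and for every `ε > 0`
the sum of norms of the terms lying in the cone `S_ε(u)` diverges. -/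
noncomputable def IsLevy (x : ℕ → ℝ × ℝ) (u : ℝ × ℝ) : Prop :=
  enorm2 u = 1 ∧ ∀ ε : ℝ, 0 < ε → ¬ Summable (fun n =>
    if (1 - ε) * enorm2 u * enorm2 (x n) ≤ dot2 u (x n) then enorm2 (x n) else 0)

/-- The series `∑ x n` converges (in the given order) to `s`. -/
def ConvergesTo (x : ℕ → ℝ × ℝ) (s : ℝ × ℝ) : Prop :=
  Tendsto (fun N => ∑ n ∈ Finset.range N, x n) atTop (𝓝 s)

/-- The series `∑ x n` is conditionally convergent. -/
noncomputable def CondConv (x : ℕ → ℝ × ℝ) : Prop :=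
  (∃ s, ConvergesTo x s) ∧ ¬ Summable (fun n => enorm2 (x n))

/-- `s` belongs to the achievement set `A(x)`. -/
def Achieves (x : ℕ → ℝ × ℝ) (s : ℝ × ℝ) : Prop :=
  ∃ E : Set ℕ, ConvergesTo (Set.indicator E x) s

/-- `s` belongs to the absolute achievement set `A_abs(x)`. -/
noncomputable def AchievesAbs (x : ℕ → ℝ × ℝ) (s : ℝ × ℝ) : Prop :=
  ∃ E : Set ℕ, Summable (fun n => enorm2 (Set.indicator E x n)) ∧
    HasSum (Set.indicator E x) s

/-- The reduction property of a series `∑ (x n, y n)`. -/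
noncomputable def ReductionProperty (x y : ℕ → ℝ) : Prop :=
  Tendsto (fun n => |y n| / |x n|) atTop atTop ∧
  ∀ ε : ℝ, 0 < ε → ∀ t ∈ Set.Ioo (-ε) ε, ∀ N : ℕ,
    ∃ m : ℕ, ∃ k : ℕ → ℕ, 0 < m ∧ StrictMono k ∧ N ≤ k 0 ∧
      |(∑ i ∈ Finset.range m, x (k i)) - t| < ε / 2 ∧
      ∀ j : ℕ, 1 ≤ j → j ≤ m →
        |∑ i ∈ Finset.range j, x (k i)| < ε ∧ |∑ i ∈ Finset.range j, y (k i)| < ε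


lemma key_aux (x y : ℕ → ℝ)
    (hxy : ∀ δ : ℝ, 0 < δ → ∀ᶠ n in atTop, |x n| ≤ δ * |y n|)
    (C : ℝ) (hC : ∀ M, |∑ n ∈ Finset.range M, y n| ≤ C)
    (hns : ¬ Summable (fun n => Real.sqrt (x n ^ 2 + y n ^ 2)))
    (ε : ℝ) (hε : 0 < ε) (hε2 : ε ≤ 1/2) :
    ¬ Summable (fun n => if (1 - ε) * Real.sqrt (x n ^ 2 + y n ^ 2) ≤ y n
        then Real.sqrt (x n ^ 2 + y n ^ 2) else 0) := by
  intro hg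
  set f : ℕ → ℝ := fun n => Real.sqrt (x n ^ 2 + y n ^ 2) with hfdef
  set g : ℕ → ℝ := fun n => if (1 - ε) * f n ≤ y n then f n else 0 with hgdef
  have hf0 : ∀ n, 0 ≤ f n := fun n => Real.sqrt_nonneg _
  have hg0 : ∀ n, 0 ≤ g n := by
    intro n; simp only [hgdef]; split; exacts [hf0 n, le_rfl]
  have hfy : ∀ n, |y n| ≤ f n := by
    intro n
    rw [hfdef]
    calc |y n| = Real.sqrt ((y n)^2) := (Real.sqrt_sq_eq_abs _).symm
      _ ≤ _ := Real.sqrt_le_sqrt (by nlinarith [sq_nonneg (x n)])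
  obtain ⟨N, hN⟩ := (hxy ε hε).exists_forall_of_atTop
  have hub : ∀ n, N ≤ n → f n ≤ (1 + ε) * |y n| := by
    intro n hn
    have hx := hN n hn
    have h1 : f n ≤ |x n| + |y n| := by
      rw [hfdef]
      calc Real.sqrt (x n ^ 2 + y n ^ 2) ≤ Real.sqrt ((|x n| + |y n|)^2) := by
            apply Real.sqrt_le_sqrt
            nlinarith [abs_nonneg (x n), abs_nonneg (y n), sq_abs (x n), sq_abs (y n),
              mul_nonneg (abs_nonneg (x n)) (abs_nonneg (y n))]
        _ = |x n| + |y n| := Real.sqrt_sq (by positivity)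
    linarith
  have hkey : ∀ n, N ≤ n → f n ≤ 4 * g n - 2 * y n := by
    intro n hn
    have h2 := hub n hn
    by_cases hy : 0 ≤ y n
    · have hay : |y n| = y n := abs_of_nonneg hy
      have hcond : (1 - ε) * f n ≤ y n := by
        nlinarith [mul_le_mul_of_nonneg_left h2 (show (0:ℝ) ≤ 1 - ε by linarith),
          sq_nonneg ε, abs_nonneg (y n)]
      have : g n = f n := if_pos hcond
      rw [this]
      nlinarith [hfy n, abs_nonneg (y n)]
    · push_neg at hy
      have hcond : ¬ ((1 - ε) * f n ≤ y n) := by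
        push_neg
        calc y n < 0 := hy
          _ ≤ (1 - ε) * f n := mul_nonneg (by linarith) (hf0 n)
      have : g n = 0 := if_neg hcond
      rw [this]
      have hay := abs_of_neg hy
      nlinarith [abs_nonneg (y n), hε]
  have hC0 : 0 ≤ C := by simpa using hC 0
  have htg : 0 ≤ ∑' n, g n := tsum_nonneg hg0
  have hbound : ∀ M, ∑ n ∈ Finset.range M, f n ≤
      ∑ n ∈ Finset.range N, f n + 4 * ∑' n, g n + 4 * C := by
    intro M
    rcases le_or_gt M N with h | h
    · have h1 : ∑ n ∈ Finset.range M, f n ≤ ∑ n ∈ Finset.range N, f n :=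
        Finset.sum_le_sum_of_subset_of_nonneg (Finset.range_subset_range.mpr h)
          (fun i _ _ => hf0 i)
      linarith
    · have hMN : N ≤ M := h.le
      have hsplit := Finset.sum_range_add_sum_Ico f hMN
      have h1 : ∑ n ∈ Finset.Ico N M, f n ≤ ∑ n ∈ Finset.Ico N M, (4 * g n - 2 * y n) :=
        Finset.sum_le_sum (fun i hi => hkey i (Finset.mem_Ico.mp hi).1)
      have h2 : ∑ n ∈ Finset.Ico N M, (4 * g n - 2 * y n)
          = 4 * ∑ n ∈ Finset.Ico N M, g n - 2 * ∑ n ∈ Finset.Ico N M, y n := by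
        rw [Finset.sum_sub_distrib, ← Finset.mul_sum, ← Finset.mul_sum]
      have h3 : ∑ n ∈ Finset.Ico N M, g n ≤ ∑' n, g n :=
        Summable.sum_le_tsum _ (fun i _ => hg0 i) hg
      have h4 : ∑ n ∈ Finset.Ico N M, y n
          = ∑ n ∈ Finset.range M, y n - ∑ n ∈ Finset.range N, y n :=
        Finset.sum_Ico_eq_sub y hMN
      have h5 := abs_le.mp (hC M)
      have h6 := abs_le.mp (hC N)
      linarith
  exact hns (summable_of_sum_range_le hf0 hbound)
theorem stmt_11 (x y : ℕ → ℝ) (hred : ReductionProperty x y)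
    (hcc : CondConv (fun n => (x n, y n))) :
    {u : ℝ × ℝ | IsLevy (fun n => (x n, y n)) u} = {((0 : ℝ), (1 : ℝ)), ((0 : ℝ), (-1 : ℝ))} := by
  obtain ⟨⟨s, hs⟩, hns⟩ := hcc
  have hnsf : ¬ Summable (fun n => Real.sqrt (x n ^ 2 + y n ^ 2)) := by
    simpa [enorm2] using hns
  -- eventual smallness of |x n| relative to |y n|
  have hxy : ∀ δ : ℝ, 0 < δ → ∀ᶠ n in atTop, |x n| ≤ δ * |y n| := by
    intro δ hδ
    filter_upwards [hred.1.eventually_ge_atTop (1/δ)] with n hn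
    rcases eq_or_ne (x n) 0 with h | h
    · simp only [h, abs_zero]
      positivity
    · have hx : 0 < |x n| := abs_pos.mpr h
      rw [le_div_iff₀ hx] at hn
      have h1 : δ * (1/δ * |x n|) ≤ δ * |y n| := mul_le_mul_of_nonneg_left hn hδ.le
      have h2 : δ * (1/δ * |x n|) = |x n| := by field_simp
      linarith
  -- boundedness of the partial sums of y
  have hTy : Tendsto (fun M => ∑ n ∈ Finset.range M, y n) atTop (𝓝 s.2) := by
    have h := (continuous_snd.tendsto s).comp hs
    simpa [Function.comp_def, Prod.snd_sum] using h
  obtain ⟨C, hC⟩ : ∃ C : ℝ, ∀ M, |∑ n ∈ Finset.range M, y n| ≤ C := by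
    obtain ⟨cu, hcu⟩ := hTy.bddAbove_range
    obtain ⟨cl, hcl⟩ := hTy.bddBelow_range
    refine ⟨max cu (-cl), fun M => abs_le.mpr ⟨?_, ?_⟩⟩
    · have := hcl (Set.mem_range_self M)
      have h2 : -max cu (-cl) ≤ cl := by
        have := le_max_right cu (-cl); linarith
      linarith
    · exact le_trans (hcu (Set.mem_range_self M)) (le_max_left _ _)
  ext u
  simp only [Set.mem_setOf_eq, Set.mem_insert_iff, Set.mem_singleton_iff]
  constructor
  · rintro ⟨hu1, hu2⟩
    have hsq : u.1 ^ 2 + u.2 ^ 2 = 1 := Real.sqrt_eq_one.mp hu1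
    have ha : u.1 = 0 := by
      by_contra ha
      have hb : |u.2| < 1 := by
        have h1 : 0 < u.1 ^ 2 := by positivity
        nlinarith [sq_abs u.2, abs_nonneg u.2]
      set ε : ℝ := (1 - |u.2|) / 2 with hεdef
      have hε : 0 < ε := by rw [hεdef]; linarith
      set δ : ℝ := (1 - |u.2|) / (2 * (|u.1| + 1)) with hδdef
      have hA : (0:ℝ) ≤ |u.1| := abs_nonneg _
      have hδ : 0 < δ := by rw [hδdef]; exact div_pos (by linarith) (by positivity)
      obtain ⟨N, hN⟩ := (hxy δ hδ).exists_forall_of_atTop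
      have hcoef : |u.1| * δ + |u.2| < 1 - ε := by
        have h1 : |u.1| * δ < (|u.1| + 1) * δ := by nlinarith
        have h2 : (|u.1| + 1) * δ = (1 - |u.2|) / 2 := by
          rw [hδdef]; field_simp
        rw [hεdef]; linarith
      apply hu2 ε hε
      have hzero : ∀ n, N ≤ n →
          (if (1 - ε) * enorm2 u * enorm2 (x n, y n) ≤ dot2 u (x n, y n)
            then enorm2 (x n, y n) else 0) = 0 := by
        intro n hn
        have hfy : |y n| ≤ enorm2 (x n, y n) := by
          simp only [enorm2]
          calc |y n| = Real.sqrt ((y n)^2) := (Real.sqrt_sq_eq_abs _).symm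
            _ ≤ _ := Real.sqrt_le_sqrt (by nlinarith [sq_nonneg (x n)])
        rcases eq_or_lt_of_le (Real.sqrt_nonneg (x n ^ 2 + y n ^ 2)) with hf0 | hfpos
        · simp only [enorm2, ← hf0]
          split <;> rfl
        · have hfail : dot2 u (x n, y n) < (1 - ε) * enorm2 u * enorm2 (x n, y n) := by
            have hxn := hN n hn
            have e1 : u.1 * x n ≤ |u.1| * |x n| := by
              calc u.1 * x n ≤ |u.1 * x n| := le_abs_self _
                _ = |u.1| * |x n| := abs_mul _ _
            have e2 : u.2 * y n ≤ |u.2| * |y n| := by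
              calc u.2 * y n ≤ |u.2 * y n| := le_abs_self _
                _ = |u.2| * |y n| := abs_mul _ _
            have e3 : |u.1| * |x n| ≤ |u.1| * (δ * |y n|) :=
              mul_le_mul_of_nonneg_left hxn hA
            have e4 : (|u.1| * δ + |u.2|) * |y n| ≤ (|u.1| * δ + |u.2|) * enorm2 (x n, y n) := by
              apply mul_le_mul_of_nonneg_left hfy
              positivity
            have e5 : (|u.1| * δ + |u.2|) * enorm2 (x n, y n)
                < (1 - ε) * enorm2 (x n, y n) :=
              mul_lt_mul_of_pos_right hcoef (by simpa [enorm2] using hfpos)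
            rw [hu1]
            simp only [dot2, enorm2] at e4 e5 ⊢
            nlinarith [e1, e2, e3, e4, e5]
          rw [if_neg (not_le.mpr hfail)]
      have hz : Summable (fun n : ℕ =>
          (if (1 - ε) * enorm2 u * enorm2 ((fun n => (x n, y n)) (n + N)) ≤
              dot2 u ((fun n => (x n, y n)) (n + N))
            then enorm2 ((fun n => (x n, y n)) (n + N)) else 0)) := by
        apply summable_zero.congr
        intro n
        exact (hzero (n + N) (Nat.le_add_left _ _)).symm
      exact (summable_nat_add_iff N).mp hz
    have hb : u.2 ^ 2 = 1 := by rw [ha] at hsq; simpa using hsq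
    have : (u.2 - 1) * (u.2 + 1) = 0 := by ring_nf; linarith
    rcases mul_eq_zero.mp this with h | h
    · have h2 : u.2 = 1 := by linarith
      exact Or.inl (Prod.ext ha h2)
    · have h2 : u.2 = -1 := by linarith
      exact Or.inr (Prod.ext ha h2)
  · have hmain : ∀ z : ℕ → ℝ, (z = y ∨ z = fun n => -y n) →
        ∀ ε : ℝ, 0 < ε → ¬ Summable (fun n =>
          if (1 - ε) * Real.sqrt (x n ^ 2 + y n ^ 2) ≤ z n
            then Real.sqrt (x n ^ 2 + y n ^ 2) else 0) := by
      intro z hz ε hε hsum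
      set ε' : ℝ := min ε (1/2) with hε'def
      have hε' : 0 < ε' := lt_min hε (by norm_num)
      have habs : ∀ n, |z n| = |y n| := by
        intro n; rcases hz with h | h <;> simp [h]
      have hsq : ∀ n, z n ^ 2 = y n ^ 2 := by
        intro n; rcases hz with h | h <;> simp [h]
      have hxz : ∀ δ : ℝ, 0 < δ → ∀ᶠ n in atTop, |x n| ≤ δ * |z n| := by
        intro δ hδ
        filter_upwards [hxy δ hδ] with n hn
        rw [habs n]; exact hn
      have hCz : ∀ M, |∑ n ∈ Finset.range M, z n| ≤ C := by
        intro M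
        rcases hz with h | h
        · rw [h]; exact hC M
        · rw [h]
          rw [Finset.sum_neg_distrib, abs_neg]
          exact hC M
      have hnsz : ¬ Summable (fun n => Real.sqrt (x n ^ 2 + z n ^ 2)) := by
        intro h
        exact hnsf (h.congr (fun n => by rw [hsq n]))
      have hsum' : Summable (fun n =>
          if (1 - ε') * Real.sqrt (x n ^ 2 + z n ^ 2) ≤ z n
            then Real.sqrt (x n ^ 2 + z n ^ 2) else 0) := by
        apply Summable.of_nonneg_of_le _ _ hsum
        · intro n; split; exacts [Real.sqrt_nonneg _, le_rfl]
        · intro n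
          simp only [hsq n]
          split
          · rename_i h
            rw [if_pos]
            have h1 : (0:ℝ) ≤ Real.sqrt (x n ^ 2 + y n ^ 2) := Real.sqrt_nonneg _
            have h2 : 1 - ε ≤ 1 - ε' := by
              have := min_le_left ε (1/2); linarith
            nlinarith [min_le_left ε (1/2)]
          · rename_i h
            split
            · exact Real.sqrt_nonneg _
            · exact le_rfl
      exact key_aux x z hxz C hCz hnsz ε' hε' (min_le_right _ _) hsum'
    rintro (rfl | rfl) <;> refine ⟨by norm_num [enorm2], ?_⟩
    · intro ε hε hsum
      apply hmain y (Or.inl rfl) ε hε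
      simpa [enorm2, dot2, Real.sqrt_one] using hsum
    · intro ε hε hsum
      apply hmain (fun n => -y n) (Or.inr rfl) ε hε
      simpa [enorm2, dot2, Real.sqrt_one] using hsum
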